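/- arXiv:0806.2871 — 2 statements merged into one kernel-verified Lean document; each statement's English description precedes it below -/
import Mathlib

section
/- For every constant c > 0 there exists δ > 0 such that every complex number z with Re z ≤ 0 and |Im z| ≤ c·|Re z| satisfies |1 + e^z| ≥ δ. (In other words, |1 + e^z| is bounded from below on any closed cone directed by the negative real axis.) -/
/-- For every constant `c > 0` there exists `δ > 0` such that every complex number `z`
with `Re z ≤ 0` and `|Im z| ≤ c·|Re z|` satisfies `|1 + e^z| ≥ δ`. -/
theorem abs_one_add_exp_lower_bound_on_cone (c : ℝ) (hc : 0 < c) :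
    ∃ δ > 0, ∀ z : ℂ, z.re ≤ 0 → |z.im| ≤ c * |z.re| →
      δ ≤ ‖1 + Complex.exp z‖ := by
  set K : Set ℂ := {z : ℂ | -Real.log 2 ≤ z.re ∧ z.re ≤ 0 ∧ |z.im| ≤ c * |z.re|} with hK
  have hlog2 : (0:ℝ) < Real.log 2 := Real.log_pos (by norm_num)
  have hKclosed : IsClosed K := by
    have h1 : IsClosed {z : ℂ | -Real.log 2 ≤ z.re} :=
      isClosed_le continuous_const Complex.continuous_re
    have h2 : IsClosed {z : ℂ | z.re ≤ 0} :=
      isClosed_le Complex.continuous_re continuous_const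
    have h3 : IsClosed {z : ℂ | |z.im| ≤ c * |z.re|} :=
      isClosed_le (continuous_abs.comp Complex.continuous_im)
        (continuous_const.mul (continuous_abs.comp Complex.continuous_re))
    exact (h1.inter (h2.inter h3))
  have hKbdd : Bornology.IsBounded K := by
    apply Bornology.IsBounded.subset (Metric.isBounded_closedBall
      (x := (0:ℂ)) (r := Real.log 2 + c * Real.log 2))
    intro z hz
    obtain ⟨h1, h2, h3⟩ := hz
    simp only [Metric.mem_closedBall, dist_zero_right]
    have hre : |z.re| ≤ Real.log 2 := abs_le.2 ⟨h1, by linarith⟩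
    have him : |z.im| ≤ c * Real.log 2 :=
      h3.trans (by nlinarith)
    calc ‖z‖ ≤ |z.re| + |z.im| := Complex.norm_le_abs_re_add_abs_im z
      _ ≤ Real.log 2 + c * Real.log 2 := add_le_add hre him
  have hKcompact : IsCompact K := Metric.isCompact_of_isClosed_isBounded hKclosed hKbdd
  have hKne : K.Nonempty := ⟨0, by simp [hK, hlog2.le]⟩
  have hf : ContinuousOn (fun z : ℂ => ‖1 + Complex.exp z‖) K :=
    (continuous_norm.comp (continuous_const.add Complex.continuous_exp)).continuousOn
  obtain ⟨z₀, hz₀K, hz₀min⟩ := hKcompact.exists_isMinOn hKne hf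
  have hm : 0 < ‖1 + Complex.exp z₀‖ := by
    rcases eq_or_ne (1 + Complex.exp z₀) 0 with h | h
    · exfalso
      have hexp : Complex.exp z₀ = -1 := by linear_combination h
      have habs : Real.exp z₀.re = 1 := by
        have := congrArg Norm.norm hexp
        rwa [Complex.norm_exp, norm_neg, norm_one] at this
      have hre0 : z₀.re = 0 := by
        have h1 := Real.add_one_le_exp z₀.re
        have h2 := Real.add_one_le_exp (-z₀.re)
        rw [Real.exp_neg, habs] at h2
        rw [habs] at h1
        norm_num at h2
        linarith
      have him0 : z₀.im = 0 := by
        have h3 := hz₀K.2.2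
        rw [hre0] at h3
        simpa using h3
      have : z₀ = 0 := Complex.ext hre0 him0
      rw [this, Complex.exp_zero] at hexp
      norm_num at hexp
    · exact norm_ne_zero_iff.2 h |>.lt_of_le' (by positivity)
  refine ⟨min (1/2) ‖1 + Complex.exp z₀‖, lt_min (by norm_num) hm, ?_⟩
  intro z hre him
  by_cases hcase : -Real.log 2 ≤ z.re
  · exact le_trans (min_le_right _ _) (hz₀min ⟨hcase, hre, him⟩)
  · push_neg at hcase
    refine le_trans (min_le_left _ _) ?_
    have h1 : ‖Complex.exp z‖ ≤ 1/2 := by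
      rw [Complex.norm_exp]
      have : Real.exp z.re ≤ Real.exp (-Real.log 2) := Real.exp_le_exp.2 hcase.le
      rw [Real.exp_neg, Real.exp_log (by norm_num : (0:ℝ) < 2)] at this
      linarith
    have h2 : (1:ℝ) ≤ ‖1 + Complex.exp z‖ + ‖Complex.exp z‖ := by
      calc (1:ℝ) = ‖(1 + Complex.exp z) + (-Complex.exp z)‖ := by simp
        _ ≤ ‖1 + Complex.exp z‖ + ‖-Complex.exp z‖ :=
            norm_add_le _ _
        _ = _ := by rw [norm_neg]
    linarith
end

section
/- For every natural number n ≥ 1 there exists a constant C > 0 with the following property. For every p ∈ ℂⁿ, every ε with 0 < ε ≤ 1, and every function v : ℂⁿ → ℂ of class C¹ (with respect to the real structure), one has |v(p)| ≤ C·( ε · sup_{z ∈ B̄(p,ε)} ‖∂̄v(z)‖ + ε^{−n} · (∫_{B(p,ε)} |v|² dλ)^{1/2} ), where B(p,ε) is the euclidean ball of radius ε, B̄(p,ε) its closure, and λ Lebesgue measure on ℂⁿ ≅ ℝ^{2n}. -/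
open MeasureTheory Metric

noncomputable instance (n : ℕ) : MeasurableSpace (EuclideanSpace ℂ (Fin n)) := borel _

instance (n : ℕ) : BorelSpace (EuclideanSpace ℂ (Fin n)) := ⟨rfl⟩

/-- Lebesgue measure on `ℂⁿ ≅ ℝ^{2n}`. -/
noncomputable instance (n : ℕ) : MeasureSpace (EuclideanSpace ℂ (Fin n)) :=
  letI : InnerProductSpace ℝ (EuclideanSpace ℂ (Fin n)) := InnerProductSpace.rclikeToReal ℂ _
  measureSpaceOfInnerProductSpace

/-- The (0,1)-part of the real derivative of `v : ℂⁿ → ℂ` at `z`, as an ℝ-linear map: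
`∂̄v(z)(w) = ½( Dv(z)(w) + i·Dv(z)(i·w) )`. -/
noncomputable def dbar {n : ℕ} (v : EuclideanSpace ℂ (Fin n) → ℂ)
    (z : EuclideanSpace ℂ (Fin n)) : EuclideanSpace ℂ (Fin n) →L[ℝ] ℂ :=
  (1 / 2 : ℝ) • (fderiv ℝ v z +
    (ContinuousLinearMap.restrictScalars ℝ
        ((Complex.I : ℂ) • ContinuousLinearMap.id ℂ ℂ)).comp
      ((fderiv ℝ v z).comp
        (ContinuousLinearMap.restrictScalars ℝ
          ((Complex.I : ℂ) • ContinuousLinearMap.id ℂ (EuclideanSpace ℂ (Fin n))))))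

variable {n : ℕ}

lemma dbar_apply (v : EuclideanSpace ℂ (Fin n) → ℂ) (z w : EuclideanSpace ℂ (Fin n)) :
    dbar v z w = (1/2 : ℝ) • (fderiv ℝ v z w + Complex.I * fderiv ℝ v z (Complex.I • w)) := by
  simp [dbar, ContinuousLinearMap.smul_apply]

lemma fderiv_I_smul (v : EuclideanSpace ℂ (Fin n) → ℂ) (z w : EuclideanSpace ℂ (Fin n)) :
    fderiv ℝ v z (Complex.I • w)
      = Complex.I * fderiv ℝ v z w - 2 * Complex.I * dbar v z w := by
  have h := dbar_apply v z w
  have h2 : (2:ℂ) * dbar v z w = fderiv ℝ v z w + Complex.I * fderiv ℝ v z (Complex.I • w) := by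
    rw [h]; push_cast [Complex.real_smul]; ring
  have hI := Complex.I_sq
  linear_combination Complex.I * h2 + (fderiv ℝ v z (Complex.I • w)) * hI

lemma csmul_decomp (c : ℂ) (w : EuclideanSpace ℂ (Fin n)) :
    c • w = (c.re : ℝ) • w + (c.im : ℝ) • (Complex.I • w) := by
  have h1 : (c.re : ℝ) • w = (c.re : ℂ) • w := (Complex.coe_smul _ _).symm
  have h2 : (c.im : ℝ) • (Complex.I • w) = ((c.im : ℂ) * Complex.I) • w := by
    rw [mul_smul, Complex.coe_smul]
  rw [h1, h2, ← add_smul, Complex.re_add_im]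

lemma fderiv_csmul (v : EuclideanSpace ℂ (Fin n) → ℂ) (z w : EuclideanSpace ℂ (Fin n)) (c : ℂ) :
    fderiv ℝ v z (c • w)
      = c * fderiv ℝ v z w + ((starRingEnd ℂ) c - c) * dbar v z w := by
  have hconj : (starRingEnd ℂ) c = (c.re : ℂ) - (c.im : ℂ) * Complex.I := by
    simp [Complex.ext_iff]
  rw [csmul_decomp, map_add, _root_.map_smul, _root_.map_smul, fderiv_I_smul, hconj]
  have hre : c = (c.re : ℂ) + (c.im : ℂ) * Complex.I := (Complex.re_add_im c).symm
  rw [Complex.real_smul, Complex.real_smul]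
  linear_combination ((dbar v z w) - (fderiv ℝ v z w)) * hre

lemma continuous_dbar {v : EuclideanSpace ℂ (Fin n) → ℂ} (hv : ContDiff ℝ 1 v) :
    Continuous fun z => dbar v z := by
  have hD : Continuous fun z : EuclideanSpace ℂ (Fin n) => fderiv ℝ v z :=
    hv.continuous_fderiv one_ne_zero
  unfold dbar
  exact (hD.add (continuous_const.clm_comp (hD.clm_comp continuous_const))).const_smul (1 / 2 : ℝ)

lemma ftc_line {v : EuclideanSpace ℂ (Fin n) → ℂ} (hv : ContDiff ℝ 1 v)
    (p u : EuclideanSpace ℂ (Fin n)) :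
    v (p + u) - v p = ∫ t in (0:ℝ)..1, fderiv ℝ v (p + t • u) u := by
  have hpath : ∀ t : ℝ, HasDerivAt (fun s : ℝ => p + s • u) u t := by
    intro t
    have := ((hasDerivAt_id t).smul_const u).const_add p
    simpa using this
  have hder : ∀ t : ℝ, HasDerivAt (fun s : ℝ => v (p + s • u)) (fderiv ℝ v (p + t • u) u) t := by
    intro t
    exact ((hv.differentiable one_ne_zero _).hasFDerivAt.comp_hasDerivAt t (hpath t))
  have hcont : Continuous fun t : ℝ => fderiv ℝ v (p + t • u) u := by
    exact ((hv.continuous_fderiv one_ne_zero).comp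
      (continuous_const.add (continuous_id.smul continuous_const))).clm_apply continuous_const
  have := intervalIntegral.integral_eq_sub_of_hasDerivAt (f := fun s : ℝ => v (p + s • u))
    (fun t _ => hder t) (hcont.intervalIntegrable 0 1)
  rw [this]
  norm_num

lemma swap_II {X : Type*} [NormedAddCommGroup X] [NormedSpace ℝ X] [CompleteSpace X]
    {f : ℝ → ℝ → X} (hf : Continuous (Function.uncurry f)) {a b c d : ℝ}
    (hab : a ≤ b) (hcd : c ≤ d) :
    ∫ x in a..b, ∫ y in c..d, f x y = ∫ y in c..d, ∫ x in a..b, f x y := by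
  have hint : Integrable (Function.uncurry f)
      ((volume.restrict (Set.Ioc a b)).prod (volume.restrict (Set.Ioc c d))) := by
    rw [Measure.prod_restrict]
    exact (hf.continuousOn.integrableOn_compact (isCompact_Icc.prod isCompact_Icc)).mono_set
      (Set.prod_mono Set.Ioc_subset_Icc_self Set.Ioc_subset_Icc_self)
  rw [intervalIntegral.integral_of_le hab, intervalIntegral.integral_of_le hcd]
  simp_rw [intervalIntegral.integral_of_le hcd, intervalIntegral.integral_of_le hab]
  exact MeasureTheory.integral_integral_swap hint

lemma swap_ball {f : EuclideanSpace ℂ (Fin n) → ℝ → ℂ}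
    (hf : Continuous (Function.uncurry f)) (q : EuclideanSpace ℂ (Fin n)) {ε c d : ℝ}
    (hε : 0 < ε) (hcd : c ≤ d) :
    ∫ w in ball q ε, ∫ θ in c..d, f w θ = ∫ θ in c..d, ∫ w in ball q ε, f w θ := by
  have hint : Integrable (Function.uncurry f)
      ((volume.restrict (ball q ε)).prod (volume.restrict (Set.Ioc c d))) := by
    rw [Measure.prod_restrict]
    exact (hf.continuousOn.integrableOn_compact
        ((isCompact_closedBall q ε).prod isCompact_Icc)).mono_set
      (Set.prod_mono ball_subset_closedBall Set.Ioc_subset_Icc_self)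
  simp_rw [intervalIntegral.integral_of_le hcd]
  exact MeasureTheory.integral_integral_swap hint

/-- Multiplication by a unit complex number as a real-linear isometry of `ℂⁿ`. -/
noncomputable def rotE (n : ℕ) (c : ℂ) (hc : c ≠ 0) (hc1 : ‖c‖ = 1) :
    EuclideanSpace ℂ (Fin n) ≃ₗᵢ[ℝ] EuclideanSpace ℂ (Fin n) where
  toLinearEquiv :=
    (LinearEquiv.smulOfNeZero ℂ (EuclideanSpace ℂ (Fin n)) c hc).restrictScalars ℝ
  norm_map' := fun x => by
    show ‖c • x‖ = ‖x‖
    rw [norm_smul, hc1, one_mul]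

lemma rot_setIntegral (c : ℂ) (hc : c ≠ 0) (hc1 : ‖c‖ = 1)
    (g : EuclideanSpace ℂ (Fin n) → ℂ) {ε : ℝ} :
    ∫ w in ball (0 : EuclideanSpace ℂ (Fin n)) ε, g (c • w)
      = ∫ w in ball (0 : EuclideanSpace ℂ (Fin n)) ε, g w := by
  letI : InnerProductSpace ℝ (EuclideanSpace ℂ (Fin n)) := InnerProductSpace.rclikeToReal ℂ _
  have hmp : MeasurePreserving (fun w : EuclideanSpace ℂ (Fin n) => c • w) volume volume :=
    (rotE n c hc hc1).measurePreserving
  have hemb : MeasurableEmbedding (fun w : EuclideanSpace ℂ (Fin n) => c • w) :=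
    (rotE n c hc hc1).toHomeomorph.measurableEmbedding
  have hpre : (fun w : EuclideanSpace ℂ (Fin n) => c • w) ⁻¹' (ball 0 ε) = ball 0 ε := by
    ext w
    simp only [Set.mem_preimage, mem_ball, dist_zero_right, norm_smul, hc1, one_mul]
  calc ∫ w in ball (0 : EuclideanSpace ℂ (Fin n)) ε, g (c • w)
      = ∫ w in (fun w : EuclideanSpace ℂ (Fin n) => c • w) ⁻¹' (ball 0 ε), g (c • w) := by
        rw [hpre]
    _ = ∫ w in ball (0 : EuclideanSpace ℂ (Fin n)) ε, g w :=
        hmp.setIntegral_preimage_emb hemb g _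

lemma translate_setIntegral (q : EuclideanSpace ℂ (Fin n))
    (g : EuclideanSpace ℂ (Fin n) → ℂ) {ε : ℝ} :
    ∫ w in ball (0 : EuclideanSpace ℂ (Fin n)) ε, g (q + w) = ∫ z in ball q ε, g z := by
  have hmp : MeasurePreserving (fun w : EuclideanSpace ℂ (Fin n) => q + w) volume volume :=
    measurePreserving_add_left volume q
  have hemb : MeasurableEmbedding (fun w : EuclideanSpace ℂ (Fin n) => q + w) :=
    (Homeomorph.addLeft q).measurableEmbedding
  have hpre : (fun w : EuclideanSpace ℂ (Fin n) => q + w) ⁻¹' (ball q ε) = ball 0 ε := by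
    ext w
    simp [mem_ball, dist_eq_norm]
  calc ∫ w in ball (0 : EuclideanSpace ℂ (Fin n)) ε, g (q + w)
      = ∫ w in (fun w : EuclideanSpace ℂ (Fin n) => q + w) ⁻¹' (ball q ε), g (q + w) := by
        rw [hpre]
    _ = ∫ z in ball q ε, g z := hmp.setIntegral_preimage_emb hemb g _

open Real in
lemma integral_circle_exp : (∫ θ in (0:ℝ)..(2*π), Complex.exp (θ * Complex.I)) = 0 := by
  have hder : ∀ θ : ℝ, HasDerivAt (fun θ : ℝ => -Complex.I * Complex.exp (θ * Complex.I))
      (Complex.exp (θ * Complex.I)) θ := by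
    intro θ
    have h1 : HasDerivAt (fun θ : ℝ => (θ : ℂ) * Complex.I) Complex.I θ := by
      simpa using (Complex.ofRealCLM.hasDerivAt (x := θ)).mul_const Complex.I
    have := (h1.cexp.const_mul (-Complex.I))
    have hI := Complex.I_sq
    exact this.congr_deriv (by linear_combination (-Complex.exp (θ * Complex.I)) * hI)
  rw [intervalIntegral.integral_eq_sub_of_hasDerivAt (fun θ _ => hder θ)
    ((Complex.continuous_exp.comp (Complex.continuous_ofReal.mul continuous_const)).intervalIntegrable _ _)]
  have : Complex.exp ((2*π : ℝ) * Complex.I) = 1 := by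
    push_cast
    exact Complex.exp_two_pi_mul_I
  simp [this]

open Real in
lemma integral_circle_exp_neg : (∫ θ in (0:ℝ)..(2*π), Complex.exp (-(θ * Complex.I))) = 0 := by
  have hder : ∀ θ : ℝ, HasDerivAt (fun θ : ℝ => Complex.I * Complex.exp (-(θ * Complex.I)))
      (Complex.exp (-(θ * Complex.I))) θ := by
    intro θ
    have h1 : HasDerivAt (fun θ : ℝ => -((θ : ℂ) * Complex.I)) (-Complex.I) θ := by
      have h0 : HasDerivAt (fun θ : ℝ => (θ : ℂ) * Complex.I) Complex.I θ := by
        simpa using (Complex.ofRealCLM.hasDerivAt (x := θ)).mul_const Complex.I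
      exact h0.neg
    have := (h1.cexp.const_mul Complex.I)
    have hI := Complex.I_sq
    exact this.congr_deriv (by linear_combination (-Complex.exp (-(θ * Complex.I))) * hI)
  rw [intervalIntegral.integral_eq_sub_of_hasDerivAt (fun θ _ => hder θ)
    ((Complex.continuous_exp.comp ((Complex.continuous_ofReal.mul continuous_const).neg)).intervalIntegrable _ _)]
  have h2 : ((2*π:ℝ):ℂ) * Complex.I = 2*(π:ℂ)*Complex.I := by push_cast; ring
  simp [h2, Complex.exp_neg, Complex.exp_two_pi_mul_I]

lemma conj_circle_exp (θ : ℝ) :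
    (starRingEnd ℂ) (Complex.exp (θ * Complex.I)) = Complex.exp (-(θ * Complex.I)) := by
  rw [← Complex.exp_conj, map_mul, Complex.conj_ofReal, Complex.conj_I, mul_neg]

lemma contexp : Continuous fun θ : ℝ => Complex.exp ((θ:ℂ) * Complex.I) :=
  Complex.continuous_exp.comp (Complex.continuous_ofReal.mul continuous_const)

lemma contexp_neg : Continuous fun θ : ℝ => Complex.exp (-((θ:ℂ) * Complex.I)) :=
  Complex.continuous_exp.comp (Complex.continuous_ofReal.mul continuous_const).neg

lemma norm_exp_theta (θ : ℝ) : ‖Complex.exp ((θ:ℂ) * Complex.I)‖ = 1 := by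
  rw [Complex.norm_exp_ofReal_mul_I]

lemma norm_exp_neg_theta (θ : ℝ) : ‖Complex.exp (-((θ:ℂ) * Complex.I))‖ = 1 := by
  have : -((θ:ℂ) * Complex.I) = ((-θ : ℝ) : ℂ) * Complex.I := by push_cast; ring
  rw [this, Complex.norm_exp_ofReal_mul_I]

section circle

variable {v : EuclideanSpace ℂ (Fin n) → ℂ} {p w : EuclideanSpace ℂ (Fin n)}

open Real

lemma path_cont (p w : EuclideanSpace ℂ (Fin n)) (t : ℝ) :
    Continuous fun θ : ℝ => p + t • (Complex.exp ((θ:ℂ) * Complex.I) • w) :=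
  continuous_const.add ((contexp.smul continuous_const).const_smul t)

lemma path_hasDerivAt (hv : ContDiff ℝ 1 v) (p w : EuclideanSpace ℂ (Fin n)) (t θ : ℝ) :
    HasDerivAt (fun θ : ℝ => v (p + t • (Complex.exp ((θ:ℂ) * Complex.I) • w)))
      (fderiv ℝ v (p + t • (Complex.exp ((θ:ℂ) * Complex.I) • w))
        (t • ((Complex.exp ((θ:ℂ) * Complex.I) * Complex.I) • w))) θ := by
  have h1 : HasDerivAt (fun θ : ℝ => (θ:ℂ) * Complex.I) Complex.I θ := by
    simpa using (Complex.ofRealCLM.hasDerivAt (x := θ)).mul_const Complex.I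
  have hexp := h1.cexp
  have hpath := ((hexp.smul_const w).const_smul t).const_add p
  exact (hv.differentiable one_ne_zero _).hasFDerivAt.comp_hasDerivAt θ hpath

lemma J_eq_zero (hv : ContDiff ℝ 1 v) (p w : EuclideanSpace ℂ (Fin n)) (t : ℝ) :
    (∫ θ in (0:ℝ)..(2*π), fderiv ℝ v (p + t • (Complex.exp ((θ:ℂ) * Complex.I) • w))
      ((Complex.exp ((θ:ℂ) * Complex.I) * Complex.I) • w)) = 0 := by
  have hD : Continuous fun z : EuclideanSpace ℂ (Fin n) => fderiv ℝ v z :=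
    hv.continuous_fderiv one_ne_zero
  rcases eq_or_ne t 0 with ht | ht
  · subst ht
    simp only [zero_smul, add_zero]
    have hfun : ∀ θ : ℝ, fderiv ℝ v p ((Complex.exp ((θ:ℂ) * Complex.I) * Complex.I) • w)
        = Complex.exp ((θ:ℂ) * Complex.I) *
            (Complex.I * fderiv ℝ v p w - Complex.I * dbar v p w)
          + Complex.exp (-((θ:ℂ) * Complex.I)) * (-(Complex.I * dbar v p w)) := by
      intro θ
      rw [fderiv_csmul, map_mul, Complex.conj_I, conj_circle_exp]
      ring
    simp_rw [hfun]
    rw [intervalIntegral.integral_add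
      (f := fun θ : ℝ => Complex.exp ((θ:ℂ) * Complex.I) *
            (Complex.I * fderiv ℝ v p w - Complex.I * dbar v p w))
      (g := fun θ : ℝ => Complex.exp (-((θ:ℂ) * Complex.I)) * (-(Complex.I * dbar v p w)))
      ((contexp.mul continuous_const).intervalIntegrable _ _)
      ((contexp_neg.mul continuous_const).intervalIntegrable _ _),
      intervalIntegral.integral_mul_const, intervalIntegral.integral_mul_const,
      integral_circle_exp, integral_circle_exp_neg]
    simp
  · have hint : Continuous fun θ : ℝ =>
        fderiv ℝ v (p + t • (Complex.exp ((θ:ℂ) * Complex.I) • w))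
          (t • ((Complex.exp ((θ:ℂ) * Complex.I) * Complex.I) • w)) :=
      (hD.comp (path_cont p w t)).clm_apply
        (((contexp.mul continuous_const).smul continuous_const).const_smul t)
    have hftc := intervalIntegral.integral_eq_sub_of_hasDerivAt
      (fun θ _ => path_hasDerivAt hv p w t θ) (hint.intervalIntegrable 0 (2*π))
    have hend : p + t • (Complex.exp (((2*π:ℝ):ℂ) * Complex.I) • w)
        = p + t • (Complex.exp (((0:ℝ):ℂ) * Complex.I) • w) := by
      have h2 : ((2*π:ℝ):ℂ) * Complex.I = 2*(π:ℂ)*Complex.I := by push_cast; ring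
      rw [h2, Complex.exp_two_pi_mul_I]
      norm_num
    rw [hend] at hftc
    simp only [sub_self] at hftc
    have := hftc
    simp_rw [ContinuousLinearMap.map_smul, intervalIntegral.integral_smul] at this
    rcases smul_eq_zero.mp this with h | h
    · exact absurd h ht
    · exact h

lemma Phi_bound (hv : ContDiff ℝ 1 v) {ε M : ℝ} (hε : 0 < ε)
    (hM : ∀ z ∈ closedBall p ε, ‖dbar v z‖ ≤ M) (hw : ‖w‖ ≤ ε)
    {t : ℝ} (ht0 : 0 ≤ t) (ht1 : t ≤ 1) :
    ‖∫ θ in (0:ℝ)..(2*π), fderiv ℝ v (p + t • (Complex.exp ((θ:ℂ) * Complex.I) • w))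
        (Complex.exp ((θ:ℂ) * Complex.I) • w)‖ ≤ 2*π*(2*(‖w‖*M)) := by
  have hD : Continuous fun z : EuclideanSpace ℂ (Fin n) => fderiv ℝ v z :=
    hv.continuous_fderiv one_ne_zero
  set z : ℝ → EuclideanSpace ℂ (Fin n) :=
    fun θ => p + t • (Complex.exp ((θ:ℂ) * Complex.I) • w) with hz
  have hmem : ∀ θ : ℝ, z θ ∈ closedBall p ε := by
    intro θ
    rw [mem_closedBall, dist_eq_norm]
    have : z θ - p = t • (Complex.exp ((θ:ℂ) * Complex.I) • w) := by
      simp only [hz]; exact add_sub_cancel_left p _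
    rw [this, norm_smul, norm_smul, norm_exp_theta, one_mul, Real.norm_eq_abs, _root_.abs_of_nonneg ht0]
    calc t * ‖w‖ ≤ 1 * ε := by
          apply mul_le_mul ht1 hw (norm_nonneg w) zero_le_one
      _ = ε := one_mul ε
  have hpt : ∀ θ : ℝ, fderiv ℝ v (z θ) (Complex.exp ((θ:ℂ) * Complex.I) • w)
      = 2 * Complex.exp (-((θ:ℂ) * Complex.I)) * dbar v (z θ) w
        + (-Complex.I) • (fderiv ℝ v (z θ) ((Complex.exp ((θ:ℂ) * Complex.I) * Complex.I) • w)) := by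
    intro θ
    rw [smul_eq_mul, fderiv_csmul, fderiv_csmul, map_mul, Complex.conj_I, conj_circle_exp]
    have hI := Complex.I_sq
    linear_combination (Complex.exp ((θ:ℂ) * Complex.I) * fderiv ℝ v (z θ) w
      - Complex.exp (-((θ:ℂ) * Complex.I)) * dbar v (z θ) w
      - Complex.exp ((θ:ℂ) * Complex.I) * dbar v (z θ) w) * hI
  have hcont1 : Continuous fun θ : ℝ =>
      2 * Complex.exp (-((θ:ℂ) * Complex.I)) * dbar v (z θ) w :=
    ((continuous_const.mul contexp_neg).mul
      ((((continuous_dbar hv).comp (path_cont p w t)).clm_apply continuous_const)))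
  have hcont2 : Continuous fun θ : ℝ =>
      fderiv ℝ v (z θ) ((Complex.exp ((θ:ℂ) * Complex.I) * Complex.I) • w) :=
    (hD.comp (path_cont p w t)).clm_apply
      ((contexp.mul continuous_const).smul continuous_const)
  calc ‖∫ θ in (0:ℝ)..(2*π), fderiv ℝ v (z θ) (Complex.exp ((θ:ℂ) * Complex.I) • w)‖
      = ‖∫ θ in (0:ℝ)..(2*π), (2 * Complex.exp (-((θ:ℂ) * Complex.I)) * dbar v (z θ) w
          + (-Complex.I) • (fderiv ℝ v (z θ)
              ((Complex.exp ((θ:ℂ) * Complex.I) * Complex.I) • w)))‖ := by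
        congr 1
        exact intervalIntegral.integral_congr fun θ _ => hpt θ
    _ = ‖∫ θ in (0:ℝ)..(2*π), 2 * Complex.exp (-((θ:ℂ) * Complex.I)) * dbar v (z θ) w‖ := by
        rw [intervalIntegral.integral_add (hcont1.intervalIntegrable _ _)
          (g := fun θ : ℝ => (-Complex.I) • (fderiv ℝ v (z θ)
                ((Complex.exp ((θ:ℂ) * Complex.I) * Complex.I) • w)))
          ((hcont2.const_smul (-Complex.I)).intervalIntegrable _ _),
          intervalIntegral.integral_smul, J_eq_zero hv p w t, smul_zero, add_zero]
    _ ≤ 2*(‖w‖*M) * |2*π - 0| := by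
        apply intervalIntegral.norm_integral_le_of_norm_le_const
        intro θ _
        rw [norm_mul, norm_mul, norm_exp_neg_theta]
        simp only [Complex.norm_ofNat, mul_one]
        calc (2:ℝ) * ‖dbar v (z θ) w‖
            ≤ 2 * (‖dbar v (z θ)‖ * ‖w‖) := by
              apply mul_le_mul_of_nonneg_left _ (by norm_num)
              exact (dbar v (z θ)).le_opNorm w
          _ ≤ 2 * (M * ‖w‖) := by
              apply mul_le_mul_of_nonneg_left _ (by norm_num)
              exact mul_le_mul_of_nonneg_right (hM _ (hmem θ)) (norm_nonneg w)
          _ = 2*(‖w‖*M) := by ring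
    _ = 2*π*(2*(‖w‖*M)) := by
        rw [sub_zero, _root_.abs_of_nonneg (by positivity : (0:ℝ) ≤ 2*π)]
        ring

end circle

section avg

variable {v : EuclideanSpace ℂ (Fin n) → ℂ} {p w : EuclideanSpace ℂ (Fin n)}

open Real

lemma circAvg (hv : ContDiff ℝ 1 v) {ε M : ℝ} (hε : 0 < ε) (hM0 : 0 ≤ M)
    (hM : ∀ z ∈ closedBall p ε, ‖dbar v z‖ ≤ M) (hw : ‖w‖ ≤ ε) :
    ‖∫ θ in (0:ℝ)..(2*π), (v (p + Complex.exp ((θ:ℂ) * Complex.I) • w) - v p)‖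
      ≤ 2*π*(2*(ε*M)) := by
  have hD : Continuous fun z : EuclideanSpace ℂ (Fin n) => fderiv ℝ v z :=
    hv.continuous_fderiv one_ne_zero
  have hftc : ∀ θ : ℝ, v (p + Complex.exp ((θ:ℂ) * Complex.I) • w) - v p
      = ∫ t in (0:ℝ)..1, fderiv ℝ v (p + t • (Complex.exp ((θ:ℂ) * Complex.I) • w))
          (Complex.exp ((θ:ℂ) * Complex.I) • w) :=
    fun θ => ftc_line hv p _
  have hcont : Continuous (Function.uncurry fun (θ t : ℝ) =>
      fderiv ℝ v (p + t • (Complex.exp ((θ:ℂ) * Complex.I) • w))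
        (Complex.exp ((θ:ℂ) * Complex.I) • w)) := by
    have ec : Continuous fun q : ℝ × ℝ => Complex.exp ((q.1:ℂ) * Complex.I) :=
      contexp.comp continuous_fst
    have vec : Continuous fun q : ℝ × ℝ => Complex.exp ((q.1:ℂ) * Complex.I) • w :=
      ec.smul continuous_const
    have zc : Continuous fun q : ℝ × ℝ =>
        p + q.2 • (Complex.exp ((q.1:ℂ) * Complex.I) • w) :=
      continuous_const.add (continuous_snd.smul vec)
    exact (hD.comp zc).clm_apply vec
  calc ‖∫ θ in (0:ℝ)..(2*π), (v (p + Complex.exp ((θ:ℂ) * Complex.I) • w) - v p)‖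
      = ‖∫ t in (0:ℝ)..1, ∫ θ in (0:ℝ)..(2*π),
          fderiv ℝ v (p + t • (Complex.exp ((θ:ℂ) * Complex.I) • w))
            (Complex.exp ((θ:ℂ) * Complex.I) • w)‖ := by
        rw [← swap_II hcont (by positivity) zero_le_one]
        congr 1
        exact intervalIntegral.integral_congr fun θ _ => hftc θ
    _ ≤ 2*π*(2*(‖w‖*M)) * |1 - 0| := by
        apply intervalIntegral.norm_integral_le_of_norm_le_const
        intro t htm
        rw [Set.uIoc_of_le zero_le_one] at htm
        exact Phi_bound hv hε hM hw htm.1.le htm.2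
    _ ≤ 2*π*(2*(ε*M)) := by
        rw [sub_zero, abs_one, mul_one]
        have := mul_le_mul_of_nonneg_right hw hM0
        nlinarith [pi_pos]

end avg

open Real in
lemma ball_bound {v : EuclideanSpace ℂ (Fin n) → ℂ} {p : EuclideanSpace ℂ (Fin n)}
    (hv : ContDiff ℝ 1 v) {ε M : ℝ} (hε : 0 < ε) (hM0 : 0 ≤ M)
    (hM : ∀ z ∈ closedBall p ε, ‖dbar v z‖ ≤ M) :
    ‖∫ w in ball (0 : EuclideanSpace ℂ (Fin n)) ε, (v (p + w) - v p)‖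
      ≤ (volume (ball (0 : EuclideanSpace ℂ (Fin n)) ε)).toReal * (2*(ε*M)) := by
  letI : InnerProductSpace ℝ (EuclideanSpace ℂ (Fin n)) := InnerProductSpace.rclikeToReal ℂ _
  set S := ∫ w in ball (0 : EuclideanSpace ℂ (Fin n)) ε, (v (p + w) - v p) with hS
  have hrot : ∀ θ : ℝ, (∫ w in ball (0 : EuclideanSpace ℂ (Fin n)) ε,
      (v (p + Complex.exp ((θ:ℂ) * Complex.I) • w) - v p)) = S := by
    intro θ
    simpa using rot_setIntegral (Complex.exp ((θ:ℂ) * Complex.I)) (Complex.exp_ne_zero _)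
      (norm_exp_theta θ) (fun w => v (p + w) - v p) (ε := ε)
  have h2π : (2*π) • S = ∫ θ in (0:ℝ)..(2*π), (∫ w in ball (0 : EuclideanSpace ℂ (Fin n)) ε,
      (v (p + Complex.exp ((θ:ℂ) * Complex.I) • w) - v p)) := by
    rw [intervalIntegral.integral_congr (g := fun _ : ℝ => S) (fun θ _ => hrot θ),
      intervalIntegral.integral_const, sub_zero]
  have hcont : Continuous (Function.uncurry fun (w : EuclideanSpace ℂ (Fin n)) (θ : ℝ) =>
      v (p + Complex.exp ((θ:ℂ) * Complex.I) • w) - v p) := by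
    have : Continuous fun q : EuclideanSpace ℂ (Fin n) × ℝ =>
        p + Complex.exp ((q.2:ℂ) * Complex.I) • q.1 :=
      continuous_const.add ((contexp.comp continuous_snd).smul continuous_fst)
    exact (hv.continuous.comp this).sub continuous_const
  have hswap := swap_ball hcont (0 : EuclideanSpace ℂ (Fin n)) hε
    (by positivity : (0:ℝ) ≤ 2*π)
  rw [← hswap] at h2π
  have hballmeas : volume (ball (0 : EuclideanSpace ℂ (Fin n)) ε) < ⊤ :=
    measure_ball_lt_top
  have hperw : ∀ w ∈ ball (0 : EuclideanSpace ℂ (Fin n)) ε,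
      ‖∫ θ in (0:ℝ)..(2*π), (v (p + Complex.exp ((θ:ℂ) * Complex.I) • w) - v p)‖
        ≤ 2*π*(2*(ε*M)) := by
    intro w hw
    exact circAvg hv hε hM0 hM (le_of_lt (mem_ball_zero_iff.mp hw))
  have hnorm : ‖(2*π) • S‖ ≤ 2*π*(2*(ε*M)) * (volume (ball (0 : EuclideanSpace ℂ (Fin n)) ε)).toReal := by
    rw [h2π]
    exact norm_setIntegral_le_of_norm_le_const hballmeas hperw
  rw [norm_smul, Real.norm_eq_abs, _root_.abs_of_nonneg (by positivity : (0:ℝ) ≤ 2*π)] at hnorm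
  have hπ : 0 < 2*π := by positivity
  nlinarith [hnorm, Real.pi_pos]

open Real Module in
theorem hormander_aux (n : ℕ) (hn : 1 ≤ n) :
    ∃ C > 0, ∀ (p : EuclideanSpace ℂ (Fin n)) (ε : ℝ), 0 < ε → ε ≤ 1 →
      ∀ v : EuclideanSpace ℂ (Fin n) → ℂ, ContDiff ℝ 1 v →
        ‖v p‖ ≤
          C * (ε * (⨆ z ∈ closedBall p ε, ‖dbar v z‖) +
            ε ^ (-(n : ℝ)) * (∫ z in ball p ε, ‖v z‖ ^ 2) ^ (1/2 : ℝ)) := by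
  letI : InnerProductSpace ℝ (EuclideanSpace ℂ (Fin n)) := InnerProductSpace.rclikeToReal ℂ _
  have hfr : finrank ℝ (EuclideanSpace ℂ (Fin n)) = 2 * n := by
    rw [← finrank_mul_finrank ℝ ℂ (EuclideanSpace ℂ (Fin n)), Complex.finrank_real_complex,
      finrank_euclideanSpace_fin]
  haveI : Nontrivial (EuclideanSpace ℂ (Fin n)) :=
    nontrivial_of_finrank_pos (R := ℝ) (by rw [hfr]; omega)
  set V₁ : ℝ := (volume (ball (0 : EuclideanSpace ℂ (Fin n)) 1)).toReal with hV₁def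
  have hV₁pos : 0 < V₁ :=
    ENNReal.toReal_pos (measure_ball_pos _ _ one_pos).ne' measure_ball_lt_top.ne
  refine ⟨max 2 (V₁ ^ (-(1/2) : ℝ)), lt_of_lt_of_le two_pos (le_max_left _ _), ?_⟩
  intro p ε hε hε1 v hv
  set C := max 2 (V₁ ^ (-(1/2) : ℝ)) with hCdef
  set M := ⨆ z ∈ closedBall p ε, ‖dbar v z‖ with hMdef
  -- the sup bounds the function
  obtain ⟨K, hK⟩ := (isCompact_closedBall p ε).exists_bound_of_continuousOn
    (continuous_dbar hv).continuousOn
  have hbdd : BddAbove (Set.range fun z => ⨆ _ : z ∈ closedBall p ε, ‖dbar v z‖) := by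
    refine ⟨max K 0, ?_⟩
    rintro x ⟨z, rfl⟩
    dsimp only
    by_cases hz : z ∈ closedBall p ε
    · rw [ciSup_pos hz]; exact le_max_of_le_left (hK z hz)
    · haveI : IsEmpty (z ∈ closedBall p ε) := ⟨hz⟩
      rw [Real.iSup_of_isEmpty]
      exact le_max_right _ _
  have hM : ∀ z ∈ closedBall p ε, ‖dbar v z‖ ≤ M := by
    intro z hz
    have := le_ciSup hbdd z
    rwa [ciSup_pos hz] at this
  have hM0 : 0 ≤ M := le_trans (norm_nonneg _) (hM p (mem_closedBall_self hε.le))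
  -- volumes
  set vol := (volume (ball p ε)).toReal with hvoldef
  have hball_eq : ∀ q : EuclideanSpace ℂ (Fin n),
      volume (ball (q : EuclideanSpace ℂ (Fin n)) ε)
        = ENNReal.ofReal (ε ^ (2*n)) * volume (ball (0 : EuclideanSpace ℂ (Fin n)) 1) := by
    intro q
    rw [Measure.addHaar_ball volume q hε.le, hfr]
  have hvol_eq : vol = ε ^ (2*n) * V₁ := by
    rw [hvoldef, hball_eq p, ENNReal.toReal_mul, ENNReal.toReal_ofReal (by positivity)]
  have hvolpos : 0 < vol := by
    rw [hvol_eq]; positivity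
  have hvol_lt : volume (ball p ε) < ⊤ := measure_ball_lt_top
  -- S bound
  have hS := ball_bound hv hε hM0 hM
  have hvol0 : (volume (ball (0 : EuclideanSpace ℂ (Fin n)) ε)).toReal = vol := by
    rw [hvoldef, hball_eq p, hball_eq 0]
  rw [hvol0] at hS
  -- translation
  have hintv : IntegrableOn v (ball p ε) volume :=
    (hv.continuous.continuousOn.integrableOn_compact (isCompact_closedBall p ε)).mono_set
      ball_subset_closedBall
  have htrans : (∫ w in ball (0 : EuclideanSpace ℂ (Fin n)) ε, (v (p + w) - v p))
      = (∫ z in ball p ε, v z) - vol • v p := by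
    have h1 : (∫ w in ball (0 : EuclideanSpace ℂ (Fin n)) ε, (v (p + w) - v p))
        = ∫ z in ball p ε, (v z - v p) := translate_setIntegral p (fun z => v z - v p)
    rw [h1, integral_sub hintv (integrableOn_const hvol_lt.ne),
      setIntegral_const]
    rfl
  rw [htrans] at hS
  -- main norm inequality
  have hmain : vol * ‖v p‖ ≤ (∫ z in ball p ε, ‖v z‖) + vol * (2*(ε*M)) := by
    have h1 : ‖vol • v p‖ ≤ ‖∫ z in ball p ε, v z‖ + ‖(∫ z in ball p ε, v z) - vol • v p‖ := by
      have := norm_sub_norm_le ((∫ z in ball p ε, v z) - vol • v p) (∫ z in ball p ε, v z)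
      have h2 := norm_sub_le ((∫ z in ball p ε, v z)) ((∫ z in ball p ε, v z) - vol • v p)
      calc ‖vol • v p‖ = ‖(∫ z in ball p ε, v z) - ((∫ z in ball p ε, v z) - vol • v p)‖ := by
            congr 1; abel
        _ ≤ _ := h2
    rw [norm_smul, Real.norm_eq_abs, _root_.abs_of_nonneg hvolpos.le] at h1
    calc vol * ‖v p‖ ≤ ‖∫ z in ball p ε, v z‖ + ‖(∫ z in ball p ε, v z) - vol • v p‖ := h1
      _ ≤ (∫ z in ball p ε, ‖v z‖) + vol * (2*(ε*M)) :=
          add_le_add (norm_integral_le_integral_norm v) hS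
  -- Cauchy-Schwarz
  set Q := (∫ z in ball p ε, ‖v z‖ ^ 2) ^ (1/2 : ℝ) with hQdef
  have hQ0 : 0 ≤ Q := Real.rpow_nonneg (integral_nonneg fun z => by positivity) _
  haveI : IsFiniteMeasure (volume.restrict (ball p ε)) :=
    ⟨by rw [Measure.restrict_apply_univ]; exact hvol_lt⟩
  obtain ⟨K₂, hK₂⟩ := (isCompact_closedBall p ε).exists_bound_of_continuousOn
    hv.continuous.continuousOn
  have hmem2 : MemLp (fun z => ‖v z‖) (ENNReal.ofReal 2) (volume.restrict (ball p ε)) := by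
    apply MemLp.of_bound hv.continuous.norm.aestronglyMeasurable K₂
    filter_upwards [ae_restrict_mem measurableSet_ball] with z hz
    rw [norm_norm]
    exact hK₂ z (ball_subset_closedBall hz)
  have hmem1 : MemLp (fun _ : EuclideanSpace ℂ (Fin n) => (1:ℝ)) (ENNReal.ofReal 2)
      (volume.restrict (ball p ε)) := memLp_const 1
  have hpq : Real.HolderConjugate 2 2 := Real.HolderConjugate.two_two
  have hCS := integral_mul_le_Lp_mul_Lq_of_nonneg (μ := volume.restrict (ball p ε)) hpq
    (f := fun z => ‖v z‖) (g := fun _ => (1:ℝ))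
    (Filter.Eventually.of_forall fun z => norm_nonneg _)
    (Filter.Eventually.of_forall fun z => zero_le_one) hmem2 hmem1
  simp only [mul_one, Real.one_rpow] at hCS
  have hCS2 : (∫ z in ball p ε, ‖v z‖) ≤ Q * vol ^ (1/2 : ℝ) := by
    refine le_trans hCS ?_
    have e1 : (∫ z in ball p ε, ‖v z‖ ^ (2:ℝ)) = ∫ z in ball p ε, ‖v z‖ ^ 2 := by
      apply integral_congr_ae
      filter_upwards with z
      rw [show ((2:ℝ)) = ((2:ℕ):ℝ) by norm_num,
        Real.rpow_natCast]
    have e2 : (∫ (_ : EuclideanSpace ℂ (Fin n)) in ball p ε, (1:ℝ)) = vol := by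
      rw [setIntegral_const, smul_eq_mul, mul_one]
      rfl
    rw [e1, e2]
  have hεn : ε ^ n = ε ^ ((n:ℝ)) := (Real.rpow_natCast ε n).symm
  have hvol_half : vol ^ (1/2 : ℝ) = ε ^ n * V₁ ^ (1/2 : ℝ) := by
    rw [hvol_eq, Real.mul_rpow (by positivity) hV₁pos.le]
    congr 1
    rw [← Real.rpow_natCast ε (2*n), ← Real.rpow_mul hε.le, hεn]
    congr 1
    push_cast
    ring
  -- final combination
  rw [← mul_le_mul_iff_right₀ hvolpos]
  calc vol * ‖v p‖ ≤ (∫ z in ball p ε, ‖v z‖) + vol * (2*(ε*M)) := hmain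
    _ ≤ Q * vol ^ (1/2 : ℝ) + vol * (2*(ε*M)) := by linarith [hCS2]
    _ ≤ vol * (C * (ε * M + ε ^ (-(n:ℝ)) * Q)) := by
        have h2C : (2:ℝ) ≤ C := le_max_left _ _
        have hVC : V₁ ^ (-(1/2) : ℝ) ≤ C := le_max_right _ _
        have hC0 : 0 ≤ C := le_trans (by norm_num) h2C
        have hterm2 : vol * (2*(ε*M)) ≤ vol * (C * (ε * M)) := by
          apply mul_le_mul_of_nonneg_left _ hvolpos.le
          nlinarith [mul_nonneg hε.le hM0, h2C]
        have hterm1 : Q * vol ^ (1/2 : ℝ) ≤ vol * (C * (ε ^ (-(n:ℝ)) * Q)) := by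
          rw [hvol_half, hvol_eq]
          have hpow : ε ^ (2*n) = ε ^ n * ε ^ n := by rw [two_mul, pow_add]
          rw [hpow]
          have hcancel : ε ^ ((n:ℝ)) * ε ^ (-(n:ℝ)) = 1 := by
            rw [← Real.rpow_add hε]; simp
          have hcancel' : ε ^ n * ε ^ (-(n:ℝ)) = 1 := by rw [hεn]; exact hcancel
          have hhalf : V₁ ^ (1/2 : ℝ) = V₁ * V₁ ^ (-(1/2) : ℝ) := by
            nth_rewrite 2 [show V₁ = V₁ ^ (1:ℝ) by rw [Real.rpow_one]]
            rw [← Real.rpow_add hV₁pos]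
            norm_num
          calc Q * (ε ^ n * V₁ ^ (1/2 : ℝ)) = (ε^n * V₁ ^ (1/2:ℝ)) * Q := by ring
            _ ≤ (ε^n * (V₁ * C)) * Q := by
                apply mul_le_mul_of_nonneg_right _ hQ0
                apply mul_le_mul_of_nonneg_left _ (by positivity)
                rw [hhalf]
                exact mul_le_mul_of_nonneg_left hVC hV₁pos.le
            _ = ε ^ n * ε ^ n * V₁ * (C * (ε ^ (-(n:ℝ)) * Q)) := by
                rw [show ε ^ n * ε ^ n * V₁ * (C * (ε ^ (-(n:ℝ)) * Q))
                  = (ε ^ n * ε ^ (-(n:ℝ))) * (ε ^ n * V₁ * C * Q) by ring, hcancel', one_mul]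
                ring
        have hsplitC : vol * (C * (ε * M + ε ^ (-(n:ℝ)) * Q))
            = vol * (C * (ε * M)) + vol * (C * (ε ^ (-(n:ℝ)) * Q)) := by ring
        rw [hsplitC]
        linarith [hterm1, hterm2]

/-- Hörmander's pointwise interior estimate: for every `n ≥ 1` there is `C > 0` such that
for every `p ∈ ℂⁿ`, every `0 < ε ≤ 1` and every `C¹` function `v : ℂⁿ → ℂ`,
`|v(p)| ≤ C( ε·sup_{B̄(p,ε)} ‖∂̄v‖ + ε^{−n}·(∫_{B(p,ε)} |v|² dλ)^{1/2} )`. -/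
theorem pointwise_interior_dbar_estimate (n : ℕ) (hn : 1 ≤ n) :
    ∃ C > 0, ∀ (p : EuclideanSpace ℂ (Fin n)) (ε : ℝ), 0 < ε → ε ≤ 1 →
      ∀ v : EuclideanSpace ℂ (Fin n) → ℂ, ContDiff ℝ 1 v →
        ‖v p‖ ≤
          C * (ε * (⨆ z ∈ closedBall p ε, ‖dbar v z‖) +
            ε ^ (-(n : ℝ)) * (∫ z in ball p ε, ‖v z‖ ^ 2) ^ (1/2 : ℝ)) :=
  hormander_aux n hn
end
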